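/- Let X and U be [0,1]-valued random variables with U uniformly distributed. Then the ∞-Wasserstein distance W_∞(X,U) equals the supremum of |E f(X) − E f(U)| over all functions f : [0,1] → ℝ of bounded variation with total variation V(f) ≤ 1. -/

import Mathlib

open MeasureTheory Set Filter

namespace Stmt5Aux

noncomputable section

/-- clamp to [0,1] -/
def cl (a : ℝ) : ℝ := max 0 (min a 1)

lemma cl_mono : Monotone cl := fun _ _ h =>
  max_le_max le_rfl (min_le_min h le_rfl)

lemma cl_nonneg (a : ℝ) : 0 ≤ cl a := le_max_left _ _

lemma cl_le_one (a : ℝ) : cl a ≤ 1 := max_le zero_le_one (min_le_right _ _)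

lemma cl_mem (a : ℝ) : cl a ∈ Icc (0:ℝ) 1 := ⟨cl_nonneg a, cl_le_one a⟩

lemma cl_of_mem {a : ℝ} (h : a ∈ Icc (0:ℝ) 1) : cl a = a := by
  simp [cl, min_eq_left h.2, max_eq_right h.1]

lemma cl_idem (a : ℝ) : cl (cl a) = cl a := cl_of_mem (cl_mem a)

lemma cl_of_nonpos {a : ℝ} (h : a ≤ 0) : cl a = 0 := by
  simp [cl, max_eq_left, le_trans (min_le_left a 1) h]

lemma cl_of_ge_one {a : ℝ} (h : 1 ≤ a) : cl a = 1 := by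
  simp [cl, min_eq_right h]

lemma cl_add_le (x r : ℝ) (hr : 0 ≤ r) : cl (x + r) ≤ cl x + r := by
  simp only [cl, max_def, min_def]
  split_ifs <;> linarith

/-- the uniform measure on [0,1] -/
def nu : Measure ℝ := volume.restrict (Icc 0 1)

instance : IsProbabilityMeasure nu :=
  ⟨by simp [nu, Measure.restrict_apply, Real.volume_Icc]⟩

lemma nu_Iic (a : ℝ) : nu (Iic a) = ENNReal.ofReal (cl a) := by
  rcases le_total a 0 with h | h
  · rw [cl_of_nonpos h]
    rcases lt_or_eq_of_le h with h | h
    · have : Iic a ∩ Icc 0 1 = ∅ := by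
        ext x; simp only [mem_inter_iff, mem_Iic, mem_Icc, mem_empty_iff_false, iff_false]
        rintro ⟨h1, h2, _⟩; linarith
      simp [nu, Measure.restrict_apply, this]
    · subst h
      have : Iic (0:ℝ) ∩ Icc 0 1 = {0} := by
        ext x; simp only [mem_inter_iff, mem_Iic, mem_Icc, mem_singleton_iff]
        constructor
        · rintro ⟨h1, h2, _⟩; linarith
        · rintro rfl; norm_num
      simp [nu, Measure.restrict_apply, this]
  · have : Iic a ∩ Icc 0 1 = Icc 0 (min a 1) := by
      ext x
      simp only [mem_inter_iff, mem_Iic, mem_Icc, le_min_iff, min_le_iff]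
      tauto
    rw [nu, Measure.restrict_apply measurableSet_Iic, this, Real.volume_Icc]
    congr 1
    rw [cl, max_eq_right (le_min h zero_le_one)]
    ring

lemma nu_Iio (a : ℝ) : nu (Iio a) = ENNReal.ofReal (cl a) := by
  have h1 : nu (Iio a) ≤ nu (Iic a) := measure_mono Iio_subset_Iic_self
  have h2 : nu (Iic a) = nu (Iio a) + nu {a} := by
    rw [← Iio_union_right, measure_union (by simp) (measurableSet_singleton a)]
  have h3 : nu {a} = 0 := by
    rw [nu, Measure.restrict_apply (measurableSet_singleton a)]
    exact measure_mono_null inter_subset_left Real.volume_singleton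
  rw [← nu_Iic, h2, h3, add_zero]

open ProbabilityTheory

variable (μ : Measure ℝ) [IsProbabilityMeasure μ]

/-- the Kolmogorov-type distance to the uniform distribution -/
def K : ℝ := ⨆ x : ℝ, |cdf μ x - cl x|

variable {μ}

lemma term_le_one (x : ℝ) : |cdf μ x - cl x| ≤ 1 := by
  rw [abs_sub_le_iff]
  constructor <;>
    linarith [cdf_nonneg (μ := μ) x, cdf_le_one (μ := μ) x, cl_nonneg x, cl_le_one x]

lemma term_bdd : BddAbove (Set.range fun x : ℝ => |cdf μ x - cl x|) :=
  ⟨1, by rintro d ⟨x, rfl⟩; exact term_le_one x⟩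

lemma term_le_K (x : ℝ) : |cdf μ x - cl x| ≤ K μ := le_ciSup term_bdd x

lemma K_nonneg : 0 ≤ K μ := le_trans (abs_nonneg _) (term_le_K 0)

lemma K_le_one : K μ ≤ 1 := ciSup_le term_le_one

variable (hμ : μ (Icc 0 1) = 1)
include hμ

lemma compl_null : μ (Icc 0 1)ᶜ = 0 := by
  rw [measure_compl measurableSet_Icc (by simp), hμ]
  simp

lemma cdf_of_neg {x : ℝ} (hx : x < 0) : cdf μ x = 0 := by
  rw [cdf_eq_real, measureReal_def]
  have : μ (Iic x) = 0 := by
    apply measure_mono_null _ (compl_null hμ)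
    intro y (hy : y ≤ x)
    simp only [mem_compl_iff, mem_Icc, not_and, not_le]
    intro h0; linarith
  simp [this]

lemma cdf_of_ge_one {x : ℝ} (hx : 1 ≤ x) : cdf μ x = 1 := by
  rw [cdf_eq_real, measureReal_def]
  have h1 : μ (Iic x) = 1 := by
    refine le_antisymm prob_le_one ?_
    rw [← hμ]
    exact measure_mono (fun y hy => le_trans hy.2 hx)
  simp [h1]

omit hμ in
lemma meas_Iic_toReal (x : ℝ) : (μ (Iic x)).toReal = cdf μ x := by rw [cdf_eq_real, measureReal_def]

lemma meas_Iio_toReal_le (a : ℝ) : |(μ (Iio a)).toReal - cl a| ≤ K μ := by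
  have hseq : Tendsto (fun n : ℕ => a - 1 / (n + 1)) atTop (nhds a) := by
    have := tendsto_one_div_add_atTop_nhds_zero_nat (𝕜 := ℝ)
    simpa using (tendsto_const_nhds (x := a)).sub this
  have hU : Iio a = ⋃ n : ℕ, Iic (a - 1 / (n + 1)) := by
    ext x
    simp only [mem_Iio, mem_iUnion, mem_Iic]
    constructor
    · intro hx
      obtain ⟨n, hn⟩ := exists_nat_one_div_lt (sub_pos.mpr hx)
      exact ⟨n, by push_cast at hn ⊢; linarith⟩
    · rintro ⟨n, hn⟩
      have : (0:ℝ) < 1 / (n + 1) := by positivity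
      linarith
  have hmono : Monotone fun n : ℕ => Iic (a - 1 / (n + 1)) := by
    intro m n hmn
    apply Iic_subset_Iic.mpr
    have : (1:ℝ) / (n + 1) ≤ 1 / (m + 1) := by
      apply one_div_le_one_div_of_le (by positivity)
      push_cast; gcongr
    linarith
  have h1 : Tendsto (fun n : ℕ => μ (Iic (a - 1 / (n + 1)))) atTop (nhds (μ (Iio a))) := by
    rw [hU]; exact tendsto_measure_iUnion_atTop hmono
  have h2 : Tendsto (fun n : ℕ => (μ (Iic (a - 1 / (n + 1)))).toReal) atTop
      (nhds (μ (Iio a)).toReal) :=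
    (ENNReal.tendsto_toReal (measure_ne_top μ _)).comp h1
  have h3 : Tendsto (fun n : ℕ => cl (a - 1 / (n + 1))) atTop (nhds (cl a)) := by
    have hc : Continuous cl := continuous_const.max (continuous_id.min continuous_const)
    exact (hc.tendsto a).comp hseq
  have h4 : Tendsto (fun n : ℕ => |(μ (Iic (a - 1 / (n + 1)))).toReal - cl (a - 1 / (n + 1))|)
      atTop (nhds (|(μ (Iio a)).toReal - cl a|)) := (h2.sub h3).abs
  refine le_of_tendsto h4 (Filter.Eventually.of_forall fun n => ?_)
  rw [meas_Iic_toReal]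
  exact term_le_K _

lemma upper_meas_diff_le {S : Set ℝ} (hS : IsUpperSet S) (hSm : MeasurableSet S) :
    |(μ S).toReal - (nu S).toReal| ≤ K μ := by
  by_cases hu : S = univ
  · subst hu
    simp only [measure_univ, ENNReal.toReal_one, sub_self, abs_zero]
    exact K_nonneg
  by_cases he : S = ∅
  · subst he
    simpa using K_nonneg
  obtain ⟨b, hb⟩ : ∃ b, b ∉ S := by
    by_contra h
    push_neg at h
    exact hu (eq_univ_of_forall h)
  have hne : S.Nonempty := nonempty_iff_ne_empty.mpr he
  have hbdd : BddBelow S := ⟨b, fun x hx => by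
    by_contra h
    exact hb (hS (le_of_not_ge h) hx)⟩
  set a := sInf S with ha
  have hIoi : Ioi a ⊆ S := by
    intro x hx
    obtain ⟨y, hyS, hy⟩ := exists_lt_of_csInf_lt hne hx
    exact hS hy.le hyS
  have hIci : S ⊆ Ici a := fun x hx => csInf_le hbdd hx
  have hcIio : Iio a ⊆ Sᶜ := fun x hx h => lt_irrefl x (lt_of_lt_of_le hx (hIci h))
  have hcIic : Sᶜ ⊆ Iic a := fun x hx => (not_lt.mp (fun h => hx (hIoi h)) : x ≤ a)
  have hμc : (μ S).toReal + (μ Sᶜ).toReal = 1 := by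
    rw [← ENNReal.toReal_add (measure_ne_top _ _) (measure_ne_top _ _),
      measure_add_measure_compl hSm]
    simp
  have hνc : (nu S).toReal + (nu Sᶜ).toReal = 1 := by
    rw [← ENNReal.toReal_add (measure_ne_top _ _) (measure_ne_top _ _),
      measure_add_measure_compl hSm]
    simp
  have hνSc : (nu Sᶜ).toReal = cl a := by
    have h1 : nu (Iio a) ≤ nu Sᶜ := measure_mono hcIio
    have h2 : nu Sᶜ ≤ nu (Iic a) := measure_mono hcIic
    rw [nu_Iio] at h1
    rw [nu_Iic] at h2
    have : nu Sᶜ = ENNReal.ofReal (cl a) := le_antisymm h2 h1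
    rw [this, ENNReal.toReal_ofReal (cl_nonneg a)]
  have hμ1 : (μ (Iio a)).toReal ≤ (μ Sᶜ).toReal :=
    ENNReal.toReal_mono (measure_ne_top _ _) (measure_mono hcIio)
  have hμ2 : (μ Sᶜ).toReal ≤ cdf μ a := by
    rw [← meas_Iic_toReal]
    exact ENNReal.toReal_mono (measure_ne_top _ _) (measure_mono hcIic)
  have hL2 := meas_Iio_toReal_le hμ a
  have hL1 := term_le_K (μ := μ) a
  rw [abs_le] at hL1 hL2 ⊢
  constructor <;> linarith [hL1.1, hL1.2, hL2.1, hL2.2]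

lemma mono_integral_diff_le {g : ℝ → ℝ} (hg : Monotone g) (hg0 : g 0 = 0)
    (hgc : ∀ x, g x = g (cl x)) :
    |(∫ x, g x ∂μ) - ∫ x, g x ∂nu| ≤ g 1 * K μ := by
  have hgnn : ∀ x, 0 ≤ g x := fun x => by rw [hgc x, ← hg0]; exact hg (cl_nonneg x)
  have hgle : ∀ x, g x ≤ g 1 := fun x => by rw [hgc x]; exact hg (cl_le_one x)
  have hg1 : 0 ≤ g 1 := hgnn 1
  have hgm : Measurable g := hg.measurable
  have hint : ∀ (m : Measure ℝ), IsProbabilityMeasure m → Integrable g m := fun m hm =>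
    Integrable.mono' (integrable_const (g 1)) hgm.aestronglyMeasurable
      (ae_of_all _ fun x => by rw [Real.norm_eq_abs, abs_of_nonneg (hgnn x)]; exact hgle x)
  have hμint := (hint μ inferInstance).integral_eq_integral_meas_lt (ae_of_all _ hgnn)
  have hνint := (hint nu inferInstance).integral_eq_integral_meas_lt (ae_of_all _ hgnn)
  set S : ℝ → Set ℝ := fun t => {x | t < g x} with hSdef
  have hup : ∀ t, IsUpperSet (S t) := fun t x y hxy hx => lt_of_lt_of_le hx (hg hxy)
  have hms : ∀ t, MeasurableSet (S t) := fun t => measurableSet_lt measurable_const hgm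
  have hempty : ∀ t, g 1 < t → S t = ∅ := by
    intro t ht
    ext x
    simp only [hSdef, mem_setOf_eq, mem_empty_iff_false, iff_false, not_lt]
    exact le_trans (hgle x) ht.le
  -- restrict both integrals to Ioc 0 (g 1)
  have hrestr : ∀ (m : Measure ℝ), IsProbabilityMeasure m →
      ∫ t in Ioi 0, (m (S t)).toReal = ∫ t in Ioc 0 (g 1), (m (S t)).toReal := by
    intro m hm
    rw [setIntegral_eq_of_subset_of_ae_diff_eq_zero nullMeasurableSet_Ioi Ioc_subset_Ioi_self]
    apply Eventually.of_forall
    intro t ht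
    simp only [mem_diff, mem_Ioi, mem_Ioc, not_and, not_le] at ht
    rw [hempty t (ht.2 ht.1)]
    simp
  have hintm : ∀ (m : Measure ℝ), IsProbabilityMeasure m →
      IntegrableOn (fun t => (m (S t)).toReal) (Ioc 0 (g 1)) volume := by
    intro m hm
    have hanti : Antitone fun t => (m (S t)).toReal := by
      intro t t' htt'
      exact ENNReal.toReal_mono (measure_ne_top _ _)
        (measure_mono fun x hx => lt_of_le_of_lt htt' hx)
    refine Integrable.mono' (integrable_const 1) hanti.measurable.aestronglyMeasurable
      (ae_of_all _ fun t => ?_)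
    rw [Real.norm_eq_abs, abs_of_nonneg ENNReal.toReal_nonneg]
    exact (ENNReal.toReal_le_of_le_ofReal zero_le_one (by simpa using prob_le_one))
  have key : (∫ x, g x ∂μ) - ∫ x, g x ∂nu
      = ∫ t in Ioc 0 (g 1), ((μ (S t)).toReal - (nu (S t)).toReal) := by
    simp only [measureReal_def] at hμint hνint
    rw [hμint, hνint, hrestr μ inferInstance, hrestr nu inferInstance,
      ← integral_sub (hintm μ inferInstance) (hintm nu inferInstance)]
  rw [key, ← Real.norm_eq_abs]
  have hb := norm_setIntegral_le_of_norm_le_const_ae' (C := K μ) (μ := (volume : Measure ℝ))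
    (f := fun t => (μ (S t)).toReal - (nu (S t)).toReal) (s := Ioc 0 (g 1))
    measure_Ioc_lt_top
    (ae_of_all _ fun t _ => by
      rw [Real.norm_eq_abs]
      exact upper_meas_diff_le hμ (hup t) (hms t))
  calc ‖∫ t in Ioc 0 (g 1), ((μ (S t)).toReal - (nu (S t)).toReal)‖
      ≤ K μ * (volume (Ioc 0 (g 1))).toReal := hb
    _ = g 1 * K μ := by
        rw [Real.volume_Ioc, ENNReal.toReal_ofReal (by linarith)]
        ring_nf

omit hμ in
lemma abs_sub_le_vOFT {f : ℝ → ℝ} {s : Set ℝ} (hf : LocallyBoundedVariationOn f s)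
    {a b : ℝ} (ha : a ∈ s) (hb : b ∈ s) (hab : a ≤ b) :
    |f b - f a| ≤ variationOnFromTo f s a b := by
  rw [variationOnFromTo.eq_of_le f s hab, abs_sub_comm, ← Real.dist_eq, dist_edist]
  apply ENNReal.toReal_mono (hf a b ha hb)
  apply eVariationOn.edist_le
  exacts [⟨ha, le_rfl, hab⟩, ⟨hb, hab, le_rfl⟩]

omit hμ in
lemma integrable_of_mono_cl {g : ℝ → ℝ} (hg : Monotone g) (hgc : ∀ x, g x = g (cl x))
    (m : Measure ℝ) [IsProbabilityMeasure m] : Integrable g m := by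
  refine Integrable.mono' (integrable_const (|g 0| + |g 1|))
    hg.measurable.aestronglyMeasurable (ae_of_all _ fun x => ?_)
  have h1 : g x ≤ g 1 := by rw [hgc x]; exact hg (cl_le_one x)
  have h0 : g 0 ≤ g x := by rw [hgc x]; exact hg (cl_nonneg x)
  rw [Real.norm_eq_abs, abs_le]
  constructor
  · linarith [neg_abs_le (g 0), abs_nonneg (g 1)]
  · linarith [le_abs_self (g 1), abs_nonneg (g 0)]

lemma bv_integral_diff_le {f : ℝ → ℝ} (hvar : eVariationOn f (Icc 0 1) ≤ 1) :
    |(∫ x, f x ∂μ) - ∫ x, f x ∂nu| ≤ K μ := by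
  set s : Set ℝ := Icc (0:ℝ) 1 with hs
  have h0s : (0:ℝ) ∈ s := by simp [hs]
  have h1s : (1:ℝ) ∈ s := by simp [hs]
  have hbv : BoundedVariationOn f s :=
    ne_top_of_le_ne_top (by norm_num) hvar
  have hlbv : LocallyBoundedVariationOn f s := hbv.locallyBoundedVariationOn
  set v : ℝ → ℝ := variationOnFromTo f s 0 with hv
  set V : ℝ := (eVariationOn f s).toReal with hV
  have hv1 : v 1 = V := by
    rw [hv, hV, variationOnFromTo.eq_of_le f s zero_le_one]
    congr 1
    rw [hs, inter_self]
  have hv0 : v 0 = 0 := variationOnFromTo.self f s 0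
  have hVle : V ≤ 1 := by
    have := ENNReal.toReal_mono (by norm_num) hvar
    simpa using this
  have hcl0 : cl 0 = 0 := cl_of_mem h0s
  have hcl1 : cl 1 = 1 := cl_of_mem h1s
  set p : ℝ → ℝ := fun x => (v (cl x) + (f (cl x) - f 0)) / 2 with hp
  set q : ℝ → ℝ := fun x => (v (cl x) - (f (cl x) - f 0)) / 2 with hq
  have hkey : ∀ x y : ℝ, x ≤ y →
      |f (cl y) - f (cl x)| ≤ v (cl y) - v (cl x) := by
    intro x y hxy
    have hc := cl_mono hxy
    have h1 := abs_sub_le_vOFT hlbv (cl_mem x) (cl_mem y) hc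
    have h2 := variationOnFromTo.add hlbv h0s (cl_mem x) (cl_mem y)
    rw [hv]
    linarith
  have hpm : Monotone p := by
    intro x y hxy
    have := hkey x y hxy
    rw [abs_le] at this
    simp only [hp]
    linarith [this.1, this.2]
  have hqm : Monotone q := by
    intro x y hxy
    have := hkey x y hxy
    rw [abs_le] at this
    simp only [hq]
    linarith [this.1, this.2]
  have hp0 : p 0 = 0 := by simp [hp, hcl0, hv0]
  have hq0 : q 0 = 0 := by simp [hq, hcl0, hv0]
  have hpc : ∀ x, p x = p (cl x) := fun x => by simp [hp, cl_idem]
  have hqc : ∀ x, q x = q (cl x) := fun x => by simp [hq, cl_idem]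
  have hp1q1 : p 1 + q 1 = V := by simp [hp, hq, hcl1, hv1]; ring
  have Hp := mono_integral_diff_le hμ hpm hp0 hpc
  have Hq := mono_integral_diff_le hμ hqm hq0 hqc
  have hpint : ∀ (m : Measure ℝ) [IsProbabilityMeasure m], Integrable p m :=
    fun m _ => integrable_of_mono_cl hpm hpc m
  have hqint : ∀ (m : Measure ℝ) [IsProbabilityMeasure m], Integrable q m :=
    fun m _ => integrable_of_mono_cl hqm hqc m
  have hfeq : ∀ x ∈ s, f x = p x - q x + f 0 := by
    intro x hxs
    simp only [hp, hq]
    rw [cl_of_mem hxs]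
    ring
  have haeμ : ∀ᵐ x ∂μ, x ∈ s := by
    rw [ae_iff]
    exact measure_mono_null (fun x hx => hx) (compl_null hμ)
  have haeν : ∀ᵐ x ∂nu, x ∈ s := by
    rw [ae_iff]
    have : nu sᶜ = 0 := by
      rw [nu, Measure.restrict_apply (measurableSet_Icc.compl)]
      simp [hs]
    exact measure_mono_null (fun x hx => hx) this
  have hint_eq : ∀ (m : Measure ℝ) [IsProbabilityMeasure m], (∀ᵐ x ∂m, x ∈ s) →
      ∫ x, f x ∂m = (∫ x, p x ∂m) - (∫ x, q x ∂m) + f 0 := by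
    intro m hm hae
    have h1 : ∫ x, f x ∂m = ∫ x, (p x - q x + f 0) ∂m := by
      apply integral_congr_ae
      filter_upwards [hae] with x hx using hfeq x hx
    have hpq : Integrable (fun x => p x - q x) m := (hpint m).sub (hqint m)
    rw [h1, integral_add hpq (integrable_const (f 0)),
      integral_sub (hpint m) (hqint m), integral_const]
    simp
  rw [hint_eq μ haeμ, hint_eq nu haeν]
  have habs : |((∫ x, p x ∂μ) - (∫ x, q x ∂μ) + f 0) - ((∫ x, p x ∂nu) - (∫ x, q x ∂nu) + f 0)|
      ≤ p 1 * K μ + q 1 * K μ := by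
    rw [abs_le] at Hp Hq ⊢
    constructor <;> linarith [Hp.1, Hp.2, Hq.1, Hq.2]
  refine le_trans habs ?_
  have : p 1 * K μ + q 1 * K μ = V * K μ := by rw [← hp1q1]; ring
  rw [this]
  calc V * K μ ≤ 1 * K μ := by
        apply mul_le_mul_of_nonneg_right hVle K_nonneg
    _ = K μ := one_mul _

variable (μ) in
/-- quantile function -/
def Q (u : ℝ) : ℝ := sInf (({x | u ≤ cdf μ x} ∪ {1}) ∩ Ici 0)

omit hμ in
lemma Q_set_nonempty (u : ℝ) : (({x | u ≤ cdf μ x} ∪ {1}) ∩ Ici 0).Nonempty :=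
  ⟨1, ⟨Or.inr rfl, mem_Ici.mpr zero_le_one⟩⟩

omit hμ in
lemma Q_set_bddBelow (u : ℝ) : BddBelow (({x | u ≤ cdf μ x} ∪ {1}) ∩ Ici 0) :=
  ⟨0, fun _ hx => hx.2⟩

omit hμ in
lemma Q_mono : Monotone (Q μ) := fun u v huv =>
  csInf_le_csInf (Q_set_bddBelow u) (Q_set_nonempty v)
    (inter_subset_inter
      (union_subset_union (fun x hx => le_trans huv hx) subset_rfl) subset_rfl)

lemma Q_set_eq {u : ℝ} (hu : u ∈ Ioo (0:ℝ) 1) :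
    (({x | u ≤ cdf μ x} ∪ {1}) ∩ Ici 0) = {x | u ≤ cdf μ x} := by
  have hsub : {x | u ≤ cdf μ x} ⊆ Ici 0 := by
    intro x hx
    by_contra h
    simp only [mem_Ici, not_le] at h
    have hx' : u ≤ cdf μ x := hx
    rw [cdf_of_neg hμ h] at hx'
    exact absurd hx' (not_le.mpr hu.1)
  have h1m : (1:ℝ) ∈ {x | u ≤ cdf μ x} := by
    simp only [mem_setOf_eq, cdf_of_ge_one hμ le_rfl]
    exact hu.2.le
  ext x
  constructor
  · rintro ⟨hx | hx, _⟩
    · exact hx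
    · rw [mem_singleton_iff] at hx; subst hx; exact h1m
  · intro hx
    exact ⟨Or.inl hx, hsub hx⟩

lemma Q_galois {u : ℝ} (hu : u ∈ Ioo (0:ℝ) 1) (t : ℝ) :
    Q μ u ≤ t ↔ u ≤ cdf μ t := by
  rw [Q, Q_set_eq hμ hu]
  have hbdd : BddBelow {x | u ≤ cdf μ x} := by
    rw [← Q_set_eq hμ hu]; exact Q_set_bddBelow u
  have hne : {x | u ≤ cdf μ x}.Nonempty := by
    rw [← Q_set_eq hμ hu]; exact Q_set_nonempty u
  constructor
  · intro h
    have hn : ∀ n : ℕ, u ≤ cdf μ (t + 1/(n+1)) := by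
      intro n
      have hpos : (0:ℝ) < 1/(n+1) := by positivity
      have hlt : sInf {x | u ≤ cdf μ x} < t + 1/(n+1) := by linarith
      obtain ⟨x, hx, hxlt⟩ := exists_lt_of_csInf_lt hne hlt
      exact le_trans hx ((cdf μ).mono hxlt.le)
    have hseq : Tendsto (fun n : ℕ => t + 1 / (n + 1)) atTop (nhds t) := by
      have := tendsto_one_div_add_atTop_nhds_zero_nat (𝕜 := ℝ)
      simpa using (tendsto_const_nhds (x := t)).add this
    have hin : ∀ n : ℕ, t + 1/(n+1) ∈ Ici t := by
      intro n
      have : (0:ℝ) < 1/(n+1) := by positivity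
      simp only [mem_Ici]; linarith
    have hrc : ContinuousWithinAt (cdf μ) (Ici t) t := (cdf μ).right_continuous t
    have htend : Tendsto (fun n : ℕ => cdf μ (t + 1/(n+1))) atTop (nhds (cdf μ t)) :=
      hrc.tendsto.comp (tendsto_nhdsWithin_iff.mpr ⟨hseq, Eventually.of_forall hin⟩)
    exact ge_of_tendsto htend (Eventually.of_forall hn)
  · intro h
    exact csInf_le hbdd h

omit hμ in
lemma cl_le_self {x : ℝ} (hx : 0 ≤ x) : cl x ≤ x := max_le hx (min_le_left _ _)

lemma abs_Q_sub_le {u : ℝ} (hu : u ∈ Ioo (0:ℝ) 1) : |Q μ u - u| ≤ K μ := by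
  have hK := K_nonneg (μ := μ)
  have hup : Q μ u ≤ u + K μ := by
    rw [Q_galois hμ hu]
    rcases le_or_gt 1 (u + K μ) with h | h
    · rw [cdf_of_ge_one hμ h]; exact hu.2.le
    · have hcl : cl (u + K μ) = u + K μ := cl_of_mem ⟨by linarith [hu.1], h.le⟩
      have := term_le_K (μ := μ) (u + K μ)
      rw [hcl, abs_le] at this
      linarith [this.1]
  have hlo : u - K μ ≤ Q μ u := by
    apply le_csInf (Q_set_nonempty u)
    rintro x ⟨hx | hx, hx0⟩
    · have h1 := term_le_K (μ := μ) x
      rw [abs_le] at h1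
      have h2 : cl x ≤ x := cl_le_self hx0
      have : u ≤ cdf μ x := hx
      linarith [h1.2]
    · rw [mem_singleton_iff] at hx; subst hx
      linarith [hu.2.le]
  rw [abs_le]
  constructor <;> linarith

lemma quantile_coupling {Ω : Type*} [MeasurableSpace Ω] (P : Measure Ω) [IsProbabilityMeasure P]
    (U : Ω → ℝ) (hU : Measurable U)
    (hunif : Measure.map U P = volume.restrict (Icc (0:ℝ) 1)) :
    ∃ π : Measure (ℝ × ℝ), IsProbabilityMeasure π ∧
      π.map Prod.fst = μ ∧ π.map Prod.snd = P.map U ∧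
      ∀ᵐ p ∂π, |p.1 - p.2| ≤ K μ := by
  have hQm : Measurable (Q μ) := Q_mono.measurable
  set T : Ω → ℝ × ℝ := fun ω => (Q μ (U ω), U ω) with hT
  have hTm : Measurable T := (hQm.comp hU).prodMk hU
  have haeU : ∀ᵐ ω ∂P, U ω ∈ Ioo (0:ℝ) 1 := by
    rw [ae_iff]
    have hpre : {ω | ¬ U ω ∈ Ioo (0:ℝ) 1} = U ⁻¹' (Ioo 0 1)ᶜ := rfl
    rw [hpre, ← Measure.map_apply hU (measurableSet_Ioo.compl), hunif,
      Measure.restrict_apply (measurableSet_Ioo.compl)]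
    have : (Ioo (0:ℝ) 1)ᶜ ∩ Icc 0 1 = {0, 1} := by
      ext x
      simp only [mem_inter_iff, mem_compl_iff, mem_Ioo, mem_Icc, mem_insert_iff,
        mem_singleton_iff, not_and, not_lt]
      constructor
      · rintro ⟨h1, h2, h3⟩
        rcases lt_or_eq_of_le h2 with h | h
        · right; linarith [h1 h]
        · left; exact h.symm
      · rintro (rfl | rfl) <;> norm_num
    rw [this]
    have : volume ({0, 1} : Set ℝ) = 0 := by
      rw [show ({0, 1} : Set ℝ) = {0} ∪ {1} by rfl]
      exact le_antisymm (le_trans (measure_union_le _ _)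
        (by simp [Real.volume_singleton])) (by simp)
    exact this
  have hQU : P.map (fun ω => Q μ (U ω)) = μ := by
    refine Measure.ext_of_Iic (P.map fun ω => Q μ (U ω)) μ fun t => ?_
    rw [Measure.map_apply (hQm.comp' hU) measurableSet_Iic]
    set c := cdf μ t with hc
    have hc0 : 0 ≤ c := cdf_nonneg μ t
    have hc1 : c ≤ 1 := cdf_le_one μ t
    have hμt : μ (Iic t) = ENNReal.ofReal c := (ofReal_cdf μ t).symm
    have hae_eq : ((fun ω => Q μ (U ω)) ⁻¹' Iic t : Set Ω)
        =ᵐ[P] (U ⁻¹' (Ioo 0 1 ∩ Iic c) : Set Ω) := by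
      rw [eventuallyEq_set]
      filter_upwards [haeU] with ω hω
      simp only [mem_preimage, mem_Iic, mem_inter_iff, mem_Ioo]
      constructor
      · intro h
        exact ⟨hω, (Q_galois hμ hω t).mp h⟩
      · rintro ⟨_, h⟩
        exact (Q_galois hμ hω t).mpr h
    rw [measure_congr hae_eq, ← Measure.map_apply hU
      (measurableSet_Ioo.inter measurableSet_Iic), hunif]
    have hA : volume.restrict (Icc (0:ℝ) 1) (Ioo 0 1 ∩ Iic c) = ENNReal.ofReal c := by
      refine le_antisymm ?_ ?_
      · calc volume.restrict (Icc (0:ℝ) 1) (Ioo 0 1 ∩ Iic c)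
            ≤ nu (Iic c) := measure_mono inter_subset_right
          _ = ENNReal.ofReal c := by rw [nu_Iic, cl_of_mem ⟨hc0, hc1⟩]
      · calc ENNReal.ofReal c = volume (Ioo 0 c) := by rw [Real.volume_Ioo, sub_zero]
          _ = volume.restrict (Icc (0:ℝ) 1) (Ioo 0 c) := by
              rw [Measure.restrict_apply measurableSet_Ioo,
                inter_eq_self_of_subset_left (fun x (hx : x ∈ Ioo (0:ℝ) c) =>
                  mem_Icc.mpr ⟨hx.1.le, le_trans hx.2.le hc1⟩)]
          _ ≤ volume.restrict (Icc (0:ℝ) 1) (Ioo 0 1 ∩ Iic c) := by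
              apply measure_mono
              intro x hx
              exact ⟨⟨hx.1, lt_of_lt_of_le hx.2 hc1⟩, hx.2.le⟩
    rw [hA, hμt]
  refine ⟨P.map T, Measure.isProbabilityMeasure_map hTm.aemeasurable, ?_, ?_, ?_⟩
  · rw [Measure.map_map measurable_fst hTm]
    exact hQU
  · rw [Measure.map_map measurable_snd hTm]
    rfl
  · rw [MeasureTheory.ae_map_iff hTm.aemeasurable
      (measurableSet_le (f := fun p : ℝ × ℝ => |p.1 - p.2|) (by fun_prop) measurable_const)]
    filter_upwards [haeU] with ω hω
    exact abs_Q_sub_le hμ hω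

omit hμ in
lemma eVariationOn_neg (f : ℝ → ℝ) (s : Set ℝ) :
    eVariationOn (fun x => -f x) s = eVariationOn f s := by
  rw [eVariationOn, eVariationOn]
  apply iSup_congr
  rintro ⟨n, u, hu, us⟩
  exact Finset.sum_congr rfl fun i _ => edist_neg_neg _ _

omit hμ in
lemma indicator_eVariationOn_le (x : ℝ) :
    eVariationOn ((Iic x).indicator (fun _ => (1:ℝ))) (Icc 0 1) ≤ 1 := by
  set f := (Iic x).indicator (fun _ => (1:ℝ)) with hf
  have hnn : ∀ y, 0 ≤ f y := fun y => Set.indicator_nonneg (fun _ _ => zero_le_one) y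
  have hle1 : ∀ y, f y ≤ 1 := fun y => Set.indicator_le' (fun _ _ => le_rfl)
    (fun _ _ => zero_le_one) y
  have hanti : MonotoneOn (fun y => -f y) (Icc (0:ℝ) 1) := by
    intro a _ b _ hab
    simp only [neg_le_neg_iff]
    by_cases hb : b ∈ Iic x
    · have ha : a ∈ Iic x := le_trans hab hb
      rw [hf, Set.indicator_of_mem hb, Set.indicator_of_mem ha]
    · rw [hf, Set.indicator_of_notMem hb]
      exact hnn a
  have h01 : (0:ℝ) ∈ Icc (0:ℝ) 1 := by norm_num
  have h11 : (1:ℝ) ∈ Icc (0:ℝ) 1 := by norm_num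
  calc eVariationOn f (Icc 0 1) = eVariationOn (fun y => -f y) (Icc 0 1) :=
        (eVariationOn_neg f _).symm
    _ = eVariationOn (fun y => -f y) (Icc 0 1 ∩ Icc 0 1) := by rw [inter_self]
    _ ≤ ENNReal.ofReal (-f 1 - -f 0) := hanti.eVariationOn_le h01 h11
    _ ≤ 1 := ENNReal.ofReal_le_one.mpr (by linarith [hnn 1, hle1 0])

end

end Stmt5Aux

/-- For a `[0,1]`-valued random variable `X` and `U` uniform on
`[0,1]`, the `∞`-Wasserstein distance `W_∞(X,U)` (infimum over couplings of the
essential supremum of the distance) equals the supremum of `|E f(X) − E f(U)|`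
over measurable functions `f` of total variation at most `1` on `[0,1]`. -/
theorem stmt5
    {Ω : Type*} [MeasurableSpace Ω] (P : Measure Ω) [IsProbabilityMeasure P]
    (X U : Ω → ℝ) (hX : Measurable X) (hU : Measurable U)
    (hXrange : ∀ ω, X ω ∈ Set.Icc (0:ℝ) 1)
    (hunif : Measure.map U P = volume.restrict (Set.Icc (0:ℝ) 1)) :
    sInf {r : ℝ | 0 ≤ r ∧ ∃ π : Measure (ℝ × ℝ), IsProbabilityMeasure π ∧
        π.map Prod.fst = P.map X ∧ π.map Prod.snd = P.map U ∧
        ∀ᵐ p ∂π, |p.1 - p.2| ≤ r} =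
      sSup {d : ℝ | ∃ f : ℝ → ℝ, Measurable f ∧
        eVariationOn f (Set.Icc 0 1) ≤ 1 ∧
        d = |(∫ ω, f (X ω) ∂P) - ∫ ω, f (U ω) ∂P|} := by
  open Set Filter ProbabilityTheory Stmt5Aux in
  · classical
    set μ : Measure ℝ := P.map X with hμdef
    haveI : IsProbabilityMeasure μ := Measure.isProbabilityMeasure_map hX.aemeasurable
    haveI : IsProbabilityMeasure (P.map U) := Measure.isProbabilityMeasure_map hU.aemeasurable
    have hμsupp : μ (Set.Icc 0 1) = 1 := by
      rw [hμdef, Measure.map_apply hX measurableSet_Icc]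
      have hpre : X ⁻¹' Set.Icc 0 1 = Set.univ := Set.eq_univ_of_forall fun ω => hXrange ω
      rw [hpre, measure_univ]
    have hνdef : P.map U = nu := by rw [hunif]; rfl
    set A : Set ℝ := {r : ℝ | 0 ≤ r ∧ ∃ π : Measure (ℝ × ℝ), IsProbabilityMeasure π ∧
        π.map Prod.fst = P.map X ∧ π.map Prod.snd = P.map U ∧
        ∀ᵐ p ∂π, |p.1 - p.2| ≤ r} with hA
    set B : Set ℝ := {d : ℝ | ∃ f : ℝ → ℝ, Measurable f ∧
        eVariationOn f (Set.Icc 0 1) ≤ 1 ∧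
        d = |(∫ ω, f (X ω) ∂P) - ∫ ω, f (U ω) ∂P|} with hB
    -- K is in A via the quantile coupling
    have hKA : K μ ∈ A := by
      obtain ⟨π, hπ, hfst, hsnd, hae⟩ := quantile_coupling hμsupp P U hU hunif
      exact ⟨K_nonneg, π, hπ, by rw [hfst], hsnd, hae⟩
    -- every element of B is at most K
    have hBle : ∀ d ∈ B, d ≤ K μ := by
      rintro d ⟨f, hfm, hvar, rfl⟩
      have hiμ : ∫ ω, f (X ω) ∂P = ∫ x, f x ∂μ :=
        (integral_map hX.aemeasurable hfm.aestronglyMeasurable).symm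
      have hiν : ∫ ω, f (U ω) ∂P = ∫ x, f x ∂nu := by
        rw [← hνdef]
        exact (integral_map hU.aemeasurable hfm.aestronglyMeasurable).symm
      rw [hiμ, hiν]
      exact bv_integral_diff_le hμsupp hvar
    have h0B : (0:ℝ) ∈ B := by
      refine ⟨fun _ => 0, measurable_const, ?_, by simp⟩
      rw [eVariationOn.constant_on]
      · exact zero_le_one
      · rintro a ⟨_, _, rfl⟩ b ⟨_, _, rfl⟩
        rfl
    have hBdd : BddAbove B := ⟨K μ, hBle⟩
    -- K is at most sSup B
    have hKB : K μ ≤ sSup B := by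
      refine ciSup_le fun x => ?_
      by_cases hx : x ∈ Set.Icc (0:ℝ) 1
      · refine le_csSup hBdd ?_
        refine ⟨(Set.Iic x).indicator (fun _ => (1:ℝ)),
          measurable_const.indicator measurableSet_Iic,
          indicator_eVariationOn_le x, ?_⟩
        have hXint : ∫ ω, (Set.Iic x).indicator (fun _ => (1:ℝ)) (X ω) ∂P = cdf μ x := by
          have heq : (fun ω => (Set.Iic x).indicator (fun _ => (1:ℝ)) (X ω))
              = (X ⁻¹' Set.Iic x).indicator (fun _ => (1:ℝ)) := by
            ext ω
            by_cases h : X ω ∈ Set.Iic x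
            · rw [Set.indicator_of_mem h, Set.indicator_of_mem (by exact h)]
            · rw [Set.indicator_of_notMem h, Set.indicator_of_notMem (by exact h)]
          rw [heq, integral_indicator_const (1:ℝ) (hX measurableSet_Iic), smul_eq_mul,
            mul_one, cdf_eq_real, measureReal_def, measureReal_def, hμdef, Measure.map_apply hX measurableSet_Iic]
        have hUint : ∫ ω, (Set.Iic x).indicator (fun _ => (1:ℝ)) (U ω) ∂P = x := by
          have heq : (fun ω => (Set.Iic x).indicator (fun _ => (1:ℝ)) (U ω))
              = (U ⁻¹' Set.Iic x).indicator (fun _ => (1:ℝ)) := by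
            ext ω
            by_cases h : U ω ∈ Set.Iic x
            · rw [Set.indicator_of_mem h, Set.indicator_of_mem (by exact h)]
            · rw [Set.indicator_of_notMem h, Set.indicator_of_notMem (by exact h)]
          rw [heq, integral_indicator_const (1:ℝ) (hU measurableSet_Iic), smul_eq_mul,
            mul_one, measureReal_def, ← Measure.map_apply hU measurableSet_Iic, hνdef, nu_Iic,
            ENNReal.toReal_ofReal (cl_nonneg x), cl_of_mem hx]
        rw [hXint, hUint]
        rw [cl_of_mem hx]
      · rw [Set.mem_Icc, not_and_or] at hx
        have hterm : |cdf μ x - cl x| = 0 := by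
          rcases hx with hx | hx
          · rw [not_le] at hx
            rw [cdf_of_neg hμsupp hx, cl_of_nonpos hx.le, sub_zero, abs_zero]
          · rw [not_le] at hx
            rw [cdf_of_ge_one hμsupp hx.le, cl_of_ge_one hx.le, sub_self, abs_zero]
        rw [hterm]
        exact le_csSup hBdd h0B
    -- K is at most every element of A
    have hAlb : ∀ r ∈ A, K μ ≤ r := by
      rintro r ⟨hr0, π, hπ, hfst, hsnd, hae⟩
      refine ciSup_le fun x => ?_
      have hfst' : π.map Prod.fst = μ := by rw [hfst]
      have key : ∀ y : ℝ, cdf μ y ≤ cl (y + r) := by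
        intro y
        have h1 : μ (Set.Iic y) = π (Prod.fst ⁻¹' Set.Iic y) := by
          rw [← hfst', Measure.map_apply measurable_fst measurableSet_Iic]
        have h2 : π (Prod.fst ⁻¹' Set.Iic y) ≤ π (Prod.snd ⁻¹' Set.Iic (y + r)) := by
          apply measure_mono_ae
          filter_upwards [hae] with p hp hpy
          have h := abs_le.mp hp
          have hpy' : p.1 ≤ y := hpy
          show p.2 ≤ y + r
          linarith [h.1]
        have h3 : π (Prod.snd ⁻¹' Set.Iic (y + r)) = ENNReal.ofReal (cl (y + r)) := by
          rw [← Measure.map_apply measurable_snd measurableSet_Iic, hsnd, hνdef, nu_Iic]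
        rw [cdf_eq_real, measureReal_def, h1]
        calc (π (Prod.fst ⁻¹' Set.Iic y)).toReal
            ≤ (ENNReal.ofReal (cl (y + r))).toReal := by
              apply ENNReal.toReal_mono ENNReal.ofReal_ne_top
              rw [← h3]; exact h2
          _ = cl (y + r) := ENNReal.toReal_ofReal (cl_nonneg _)
      have key2 : ∀ y : ℝ, cl y ≤ cdf μ (y + r) := by
        intro y
        have h1 : (P.map U) (Set.Iic y) = π (Prod.snd ⁻¹' Set.Iic y) := by
          rw [← hsnd, Measure.map_apply measurable_snd measurableSet_Iic]
        have h2 : π (Prod.snd ⁻¹' Set.Iic y) ≤ π (Prod.fst ⁻¹' Set.Iic (y + r)) := by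
          apply measure_mono_ae
          filter_upwards [hae] with p hp hpy
          have h := abs_le.mp hp
          have hpy' : p.2 ≤ y := hpy
          show p.1 ≤ y + r
          linarith [h.2]
        have h3 : π (Prod.fst ⁻¹' Set.Iic (y + r)) = μ (Set.Iic (y + r)) := by
          rw [← hfst', Measure.map_apply measurable_fst measurableSet_Iic]
        have h4 : (P.map U) (Set.Iic y) = ENNReal.ofReal (cl y) := by rw [hνdef, nu_Iic]
        calc cl y = ((P.map U) (Set.Iic y)).toReal := by
              rw [h4, ENNReal.toReal_ofReal (cl_nonneg y)]
          _ ≤ (μ (Set.Iic (y + r))).toReal := by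
              apply ENNReal.toReal_mono (measure_ne_top _ _)
              rw [h1]
              exact le_of_le_of_eq h2 h3
          _ = cdf μ (y + r) := by rw [cdf_eq_real, measureReal_def]
      rw [abs_le]
      constructor
      · have h5 := key2 (x - r)
        have h6 := cl_add_le (x - r) r hr0
        rw [sub_add_cancel] at h5 h6
        linarith
      · have h5 := key x
        have h6 := cl_add_le x r hr0
        linarith
    refine le_antisymm ?_ ?_
    · exact le_trans (csInf_le ⟨0, fun r hr => hr.1⟩ hKA) hKB
    · exact csSup_le ⟨0, h0B⟩ fun d hd =>
        le_trans (hBle d hd) (le_csInf ⟨K μ, hKA⟩ hAlb)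


-- #print axioms stmt5
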